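/- Girard's translation: define A* for intuitionistic formulas by: (A_at)* = A_at, ⊥* = 0, (A ∧ B)* = A* & B*, (A ∨ B)* = !A* ⊕ !B*, (A → B)* = !A* ⊸ B*, (∀x A)* = ∀x A*, (∃x A)* = ∃x !A*. Then if Γ ⊢ A is derivable in intuitionistic first-order logic, the sequent !Γ* ⊢ A* is derivable in intuitionistic linear logic ILL. -/

import Mathlib

inductive IFml (D : Type) : Type where
  | atom : ℕ → List D → IFml D
  | bot : IFml D
  | and : IFml D → IFml D → IFml D
  | or : IFml D → IFml D → IFml D
  | imp : IFml D → IFml D → IFml D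
  | uni : (D → IFml D) → IFml D
  | exi : (D → IFml D) → IFml D

inductive LFml (D : Type) : Type where
  | atom : ℕ → List D → LFml D
  | zero : LFml D
  | tensor : LFml D → LFml D → LFml D
  | limp : LFml D → LFml D → LFml D
  | wth : LFml D → LFml D → LFml D
  | oplus : LFml D → LFml D → LFml D
  | bang : LFml D → LFml D
  | uni : (D → LFml D) → LFml D
  | exi : (D → LFml D) → LFml D

inductive Deriv {D : Type} : List (LFml D) → LFml D → Prop where
  | id : ∀ (A : LFml D), Deriv [A] A
  | exch : ∀ {Γ Δ : List (LFml D)} {A : LFml D}, List.Perm Γ Δ → Deriv Γ A → Deriv Δ A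
  | cut : ∀ {Γ Δ : List (LFml D)} {A B : LFml D}, Deriv Γ A → Deriv (A :: Δ) B → Deriv (Γ ++ Δ) B
  | zeroL : ∀ (Γ : List (LFml D)) (A : LFml D), Deriv (LFml.zero :: Γ) A
  | tensorR : ∀ {Γ Δ : List (LFml D)} {A B : LFml D}, Deriv Γ A → Deriv Δ B → Deriv (Γ ++ Δ) (LFml.tensor A B)
  | tensorL : ∀ {Γ : List (LFml D)} {A B C : LFml D}, Deriv (A :: B :: Γ) C → Deriv (LFml.tensor A B :: Γ) C
  | limpR : ∀ {Γ : List (LFml D)} {A B : LFml D}, Deriv (A :: Γ) B → Deriv Γ (LFml.limp A B)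
  | limpL : ∀ {Γ Δ : List (LFml D)} {A B C : LFml D}, Deriv Γ A → Deriv (B :: Δ) C → Deriv (LFml.limp A B :: (Γ ++ Δ)) C
  | withR : ∀ {Γ : List (LFml D)} {A B : LFml D}, Deriv Γ A → Deriv Γ B → Deriv Γ (LFml.wth A B)
  | withL₁ : ∀ {Γ : List (LFml D)} {A B C : LFml D}, Deriv (A :: Γ) C → Deriv (LFml.wth A B :: Γ) C
  | withL₂ : ∀ {Γ : List (LFml D)} {A B C : LFml D}, Deriv (B :: Γ) C → Deriv (LFml.wth A B :: Γ) C
  | oplusR₁ : ∀ {Γ : List (LFml D)} {A B : LFml D}, Deriv Γ A → Deriv Γ (LFml.oplus A B)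
  | oplusR₂ : ∀ {Γ : List (LFml D)} {A B : LFml D}, Deriv Γ B → Deriv Γ (LFml.oplus A B)
  | oplusL : ∀ {Γ : List (LFml D)} {A B C : LFml D}, Deriv (A :: Γ) C → Deriv (B :: Γ) C → Deriv (LFml.oplus A B :: Γ) C
  | contr : ∀ {Γ : List (LFml D)} {A B : LFml D}, Deriv (LFml.bang A :: LFml.bang A :: Γ) B → Deriv (LFml.bang A :: Γ) B
  | weak : ∀ {Γ : List (LFml D)} {A B : LFml D}, Deriv Γ B → Deriv (LFml.bang A :: Γ) B
  | bangR : ∀ {Γ : List (LFml D)} {A : LFml D}, Deriv (Γ.map LFml.bang) A → Deriv (Γ.map LFml.bang) (LFml.bang A)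
  | bangL : ∀ {Γ : List (LFml D)} {A B : LFml D}, Deriv (A :: Γ) B → Deriv (LFml.bang A :: Γ) B
  | uniR : ∀ {Γ : List (LFml D)} (A : D → LFml D), (∀ d, Deriv Γ (A d)) → Deriv Γ (LFml.uni A)
  | uniL : ∀ {Γ : List (LFml D)} {B : LFml D} (A : D → LFml D) (t : D), Deriv (A t :: Γ) B → Deriv (LFml.uni A :: Γ) B
  | exiR : ∀ {Γ : List (LFml D)} (A : D → LFml D) (t : D), Deriv Γ (A t) → Deriv Γ (LFml.exi A)
  | exiL : ∀ {Γ : List (LFml D)} {B : LFml D} (A : D → LFml D), (∀ d, Deriv (A d :: Γ) B) → Deriv (LFml.exi A :: Γ) B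

def biimp {D : Type} (A B : LFml D) : LFml D := LFml.wth (LFml.limp A B) (LFml.limp B A)

/-- Girard's translation of intuitionistic logic into intuitionistic linear logic. -/
def star {D : Type} : IFml D → LFml D
  | .atom n v => LFml.atom n v
  | .bot => LFml.zero
  | .and A B => LFml.wth (star A) (star B)
  | .or A B => LFml.oplus (LFml.bang (star A)) (LFml.bang (star B))
  | .imp A B => LFml.limp (LFml.bang (star A)) (star B)
  | .uni A => LFml.uni (fun d => star (A d))
  | .exi A => LFml.exi (fun d => LFml.bang (star (A d)))

/-- Intuitionistic first-order logic (sequent calculus). -/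
inductive IDeriv {D : Type} : List (IFml D) → IFml D → Prop where
  | id : ∀ (A : IFml D), IDeriv [A] A
  | exch : ∀ {Γ Δ : List (IFml D)} {A : IFml D}, List.Perm Γ Δ → IDeriv Γ A → IDeriv Δ A
  | cut : ∀ {Γ Δ : List (IFml D)} {A B : IFml D}, IDeriv Γ A → IDeriv (A :: Δ) B → IDeriv (Γ ++ Δ) B
  | weak : ∀ {Γ : List (IFml D)} {B : IFml D} (A : IFml D), IDeriv Γ B → IDeriv (A :: Γ) B
  | contr : ∀ {Γ : List (IFml D)} {A B : IFml D}, IDeriv (A :: A :: Γ) B → IDeriv (A :: Γ) B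
  | botL : ∀ (Γ : List (IFml D)) (A : IFml D), IDeriv (IFml.bot :: Γ) A
  | andR : ∀ {Γ : List (IFml D)} {A B : IFml D}, IDeriv Γ A → IDeriv Γ B → IDeriv Γ (IFml.and A B)
  | andL₁ : ∀ {Γ : List (IFml D)} {A B C : IFml D}, IDeriv (A :: Γ) C → IDeriv (IFml.and A B :: Γ) C
  | andL₂ : ∀ {Γ : List (IFml D)} {A B C : IFml D}, IDeriv (B :: Γ) C → IDeriv (IFml.and A B :: Γ) C
  | orR₁ : ∀ {Γ : List (IFml D)} {A B : IFml D}, IDeriv Γ A → IDeriv Γ (IFml.or A B)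
  | orR₂ : ∀ {Γ : List (IFml D)} {A B : IFml D}, IDeriv Γ B → IDeriv Γ (IFml.or A B)
  | orL : ∀ {Γ : List (IFml D)} {A B C : IFml D}, IDeriv (A :: Γ) C → IDeriv (B :: Γ) C → IDeriv (IFml.or A B :: Γ) C
  | impR : ∀ {Γ : List (IFml D)} {A B : IFml D}, IDeriv (A :: Γ) B → IDeriv Γ (IFml.imp A B)
  | impL : ∀ {Γ Δ : List (IFml D)} {A B C : IFml D}, IDeriv Γ A → IDeriv (B :: Δ) C → IDeriv (IFml.imp A B :: (Γ ++ Δ)) C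
  | uniR : ∀ {Γ : List (IFml D)} (A : D → IFml D), (∀ d, IDeriv Γ (A d)) → IDeriv Γ (IFml.uni A)
  | uniL : ∀ {Γ : List (IFml D)} {B : IFml D} (A : D → IFml D) (t : D), IDeriv (A t :: Γ) B → IDeriv (IFml.uni A :: Γ) B
  | exiR : ∀ {Γ : List (IFml D)} (A : D → IFml D) (t : D), IDeriv Γ (A t) → IDeriv Γ (IFml.exi A)
  | exiL : ∀ {Γ : List (IFml D)} {B : IFml D} (A : D → IFml D), (∀ d, IDeriv (A d :: Γ) B) → IDeriv (IFml.exi A :: Γ) B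

/-- if Γ ⊢ A in intuitionistic first-order logic, then !Γ* ⊢ A* in ILL. -/
lemma bangR' {D : Type} {Γ : List (IFml D)} {A : LFml D}
    (h : Deriv (Γ.map (fun B => LFml.bang (star B))) A) :
    Deriv (Γ.map (fun B => LFml.bang (star B))) (LFml.bang A) := by
  have e : Γ.map (fun B => LFml.bang (star B)) = (Γ.map star).map LFml.bang := by
    simp [List.map_map, Function.comp]
  rw [e] at h ⊢
  exact Deriv.bangR h

theorem stmt8 {D : Type} {Γ : List (IFml D)} {A : IFml D} (h : IDeriv Γ A) :
    Deriv (Γ.map (fun B => LFml.bang (star B))) (star A) := by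
  induction h with
  | id A => exact Deriv.bangL (Deriv.id _)
  | exch hp _ ih => exact Deriv.exch (List.Perm.map _ hp) ih
  | cut _ _ ih1 ih2 =>
      rw [List.map_append]
      exact Deriv.cut (bangR' ih1) ih2
  | weak A _ ih => exact Deriv.weak ih
  | contr _ ih => exact Deriv.contr ih
  | botL Γ A => exact Deriv.bangL (Deriv.zeroL _ _)
  | andR _ _ ih1 ih2 => exact Deriv.withR ih1 ih2
  | @andL₁ Γ' A B C _ ih =>
      have key : Deriv [LFml.bang (LFml.wth (star A) (star B))] (LFml.bang (star A)) :=
        Deriv.bangR (Γ := [LFml.wth (star A) (star B)])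
          (Deriv.bangL (Deriv.withL₁ (Deriv.id _)))
      exact Deriv.cut key ih
  | @andL₂ Γ' A B C _ ih =>
      have key : Deriv [LFml.bang (LFml.wth (star A) (star B))] (LFml.bang (star B)) :=
        Deriv.bangR (Γ := [LFml.wth (star A) (star B)])
          (Deriv.bangL (Deriv.withL₂ (Deriv.id _)))
      exact Deriv.cut key ih
  | orR₁ _ ih => exact Deriv.oplusR₁ (bangR' ih)
  | orR₂ _ ih => exact Deriv.oplusR₂ (bangR' ih)
  | orL _ _ ih1 ih2 => exact Deriv.bangL (Deriv.oplusL ih1 ih2)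
  | impR _ ih => exact Deriv.limpR ih
  | @impL Γ' Δ' A B C _ _ ih1 ih2 =>
      have h1 : Deriv (LFml.limp (LFml.bang (star A)) (star B) ::
          (Γ'.map (fun X => LFml.bang (star X)) ++ [])) (star B) :=
        Deriv.limpL (bangR' ih1) (Deriv.id _)
      have h2 : Deriv (LFml.bang (LFml.limp (LFml.bang (star A)) (star B)) ::
          Γ'.map (fun X => LFml.bang (star X))) (star B) :=
        Deriv.bangL (Deriv.exch (by simp) h1)
      have h3 : Deriv ((LFml.limp (LFml.bang (star A)) (star B) ::
          Γ'.map star).map LFml.bang) (LFml.bang (star B)) :=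
        Deriv.bangR (by simpa [List.map_map, Function.comp_def] using h2)
      have h4 := Deriv.cut h3 ih2
      refine Deriv.exch ?_ h4
      simp only [List.map_cons, List.map_append, List.map_map, Function.comp_def]
      exact List.Perm.refl _
  | uniR A _ ih => exact Deriv.uniR _ ih
  | uniL A t _ ih =>
      have key : Deriv [LFml.bang (LFml.uni (fun d => star (A d)))]
          (LFml.bang (star (A t))) :=
        Deriv.bangR (Γ := [LFml.uni (fun d => star (A d))])
          (Deriv.bangL (Deriv.uniL _ t (Deriv.id _)))
      exact Deriv.cut key ih
  | exiR A t _ ih => exact Deriv.exiR _ t (bangR' ih)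
  | exiL A _ ih => exact Deriv.bangL (Deriv.exiL _ ih)
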